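/- Let p, q, k be positive integers and d = gcd(p,q). If q > p or p > kq, then Γ(p,q) = p² + kq² - kpq > d². -/

import Mathlib

/-- Let `p, q, k` be positive integers and `d = gcd(p,q)`.
If `q > p` or `p > kq`, then `Γ(p,q) = p² + kq² - kpq > d²`. -/
theorem stmt_3 (p q k : ℤ) (hp : 0 < p) (hq : 0 < q) (hk : 0 < k)
    (h : q > p ∨ p > k * q) :
    p ^ 2 + k * q ^ 2 - k * p * q > (Int.gcd p q : ℤ) ^ 2 := by
  have hd0 : (0:ℤ) ≤ (Int.gcd p q : ℤ) := Int.natCast_nonneg _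
  have hdp : (Int.gcd p q : ℤ) ≤ p := Int.le_of_dvd hp (Int.gcd_dvd_left p q)
  have hdq : (Int.gcd p q : ℤ) ≤ q := Int.le_of_dvd hq (Int.gcd_dvd_right p q)
  rcases h with h | h
  · nlinarith [mul_pos hk (sub_pos.mpr h), mul_pos hk hq]
  · nlinarith [mul_pos hp (sub_pos.mpr h), mul_pos hk (mul_pos hq hq)]
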